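/- Let J1, I22, I33, I23 be real numbers with J1 > 0, I22 > 0, I23 ≠ 0, and set J2 = ½(I22+I33) + ½√((I22−I33)²+4I23²), J3 = ½(I22+I33) − ½√((I22−I33)²+4I23²). Let X(ω1, ω2) = ( (−I23 ω2² + (I22 − I33) ω2 + I23)/J1 , ω1 (I23 ω2 + I33 − J1)/I22 ) and let ω2⁺ = (I22 − I33 + √((I22−I33)² + 4 I23²))/(2 I23), ω2⁻ = (I22 − I33 − √((I22−I33)² + 4 I23²))/(2 I23). Then the Jacobian matrix of X at the equilibrium (0, ω2⁺) has trace 0 and determinant −(J1 − J2)(J2 − J3)/(J1 I22), and the Jacobian matrix of X at (0, ω2⁻) has trace 0 and determinant −(J1 − J3)(J3 − J2)/(J1 I22); equivalently, the eigenvalues of these Jacobian matrices are ±λ₊ and ±λ₋ respectively, where λ₊² = (J1 − J2)(J2 − J3)/(J1 I22) and λ₋² = (J1 − J3)(J3 − J2)/(J1 I22). -/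

import Mathlib

/-- The Jacobian matrices of the reduced inhomogeneous Suslov vector field at its two
equilibria `(0, ω2⁺)` and `(0, ω2⁻)` are traceless, with determinants
`−(J1−J2)(J2−J3)/(J1 I22)` and `−(J1−J3)(J3−J2)/(J1 I22)` respectively, i.e., their
eigenvalues are `±λ₊` and `±λ₋` with `λ₊² = (J1−J2)(J2−J3)/(J1 I22)`,
`λ₋² = (J1−J3)(J3−J2)/(J1 I22)`. -/
theorem suslov_jacobian_at_equilibria
    (J1 I22 I33 I23 J2 J3 : ℝ)
    (hJ1 : 0 < J1) (hI22 : 0 < I22) (hI23 : I23 ≠ 0)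
    (hJ2 : J2 = (I22 + I33) / 2 + Real.sqrt ((I22 - I33) ^ 2 + 4 * I23 ^ 2) / 2)
    (hJ3 : J3 = (I22 + I33) / 2 - Real.sqrt ((I22 - I33) ^ 2 + 4 * I23 ^ 2) / 2)
    (X1 X2 : ℝ → ℝ → ℝ)
    (hX1 : X1 = fun ω1 ω2 => (-I23 * ω2 ^ 2 + (I22 - I33) * ω2 + I23) / J1)
    (hX2 : X2 = fun ω1 ω2 => ω1 * (I23 * ω2 + I33 - J1) / I22)
    (ω2p ω2m : ℝ)
    (hp : ω2p = (I22 - I33 + Real.sqrt ((I22 - I33) ^ 2 + 4 * I23 ^ 2)) / (2 * I23))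
    (hm : ω2m = (I22 - I33 - Real.sqrt ((I22 - I33) ^ 2 + 4 * I23 ^ 2)) / (2 * I23)) :
    (deriv (fun x => X1 x ω2p) 0 + deriv (fun y => X2 0 y) ω2p = 0 ∧
     deriv (fun x => X1 x ω2p) 0 * deriv (fun y => X2 0 y) ω2p -
       deriv (fun y => X1 0 y) ω2p * deriv (fun x => X2 x ω2p) 0 =
       -((J1 - J2) * (J2 - J3) / (J1 * I22))) ∧
    (deriv (fun x => X1 x ω2m) 0 + deriv (fun y => X2 0 y) ω2m = 0 ∧
     deriv (fun x => X1 x ω2m) 0 * deriv (fun y => X2 0 y) ω2m -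
       deriv (fun y => X1 0 y) ω2m * deriv (fun x => X2 x ω2m) 0 =
       -((J1 - J3) * (J3 - J2) / (J1 * I22))) := by
  subst hX1 hX2
  set s := Real.sqrt ((I22 - I33) ^ 2 + 4 * I23 ^ 2) with hs
  have hs2 : s ^ 2 = (I22 - I33) ^ 2 + 4 * I23 ^ 2 := by
    rw [hs]; exact Real.sq_sqrt (by positivity)
  have hJ1' : J1 ≠ 0 := ne_of_gt hJ1
  have hI22' : I22 ≠ 0 := ne_of_gt hI22
  -- derivatives that vanish
  have d1 : ∀ w : ℝ,
      deriv (fun x : ℝ => (-I23 * w ^ 2 + (I22 - I33) * w + I23) / J1) 0 = 0 := by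
    intro w; simp
  have d2 : ∀ w : ℝ,
      deriv (fun y : ℝ => (0 : ℝ) * (I23 * y + I33 - J1) / I22) w = 0 := by
    intro w; simp
  -- off-diagonal derivatives
  have d3 : ∀ w : ℝ,
      deriv (fun y : ℝ => (-I23 * y ^ 2 + (I22 - I33) * y + I23) / J1) w
        = (-I23 * (2 * w) + (I22 - I33)) / J1 := by
    intro w
    have h : HasDerivAt (fun y : ℝ => (-I23 * y ^ 2 + (I22 - I33) * y + I23) / J1)
        ((-I23 * (2 * w) + (I22 - I33)) / J1) w := by
      have h1 : HasDerivAt (fun y : ℝ => y ^ 2) (2 * w) w := by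
        simpa using hasDerivAt_pow 2 w
      have h2 : HasDerivAt (fun y : ℝ => y) 1 w := hasDerivAt_id w
      have := (((h1.const_mul (-I23)).add ((h2.const_mul (I22 - I33)))).add_const
        I23).div_const J1
      rw [mul_one] at this
      exact this
    exact h.deriv
  have d4 : ∀ w : ℝ,
      deriv (fun x : ℝ => x * (I23 * w + I33 - J1) / I22) 0
        = (I23 * w + I33 - J1) / I22 := by
    intro w
    have h : HasDerivAt (fun x : ℝ => x * (I23 * w + I33 - J1) / I22)
        ((I23 * w + I33 - J1) / I22) 0 := by
      have := ((hasDerivAt_id (0 : ℝ)).mul_const (I23 * w + I33 - J1)).div_const I22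
      simpa using this
    exact h.deriv
  refine ⟨⟨by simp [d1, d2], ?_⟩, ⟨by simp [d1, d2], ?_⟩⟩
  · rw [d1, d2, d3, d4, hp, hJ2, hJ3]
    field_simp
    ring_nf
  · rw [d1, d2, d3, d4, hm, hJ2, hJ3]
    field_simp
    ring_nf
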